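/- Let d ≥ 2 and k ≥ 1 be integers, set ρ_k := C(k+d−2, k), and define the d-variate polynomial F_{k,d}(x) := R_{k,d}(x_1+⋯+x_d) − (1/d)·N_{k,d}(x), which represents the non-conforming Crouzeix–Raviart facet function B_k^{CR,F} on the reference simplex for the facet F opposite the origin. Then F_{k,d}(e_j) = (1+(−1)^{k+1} ρ_k)/d for every standard basis vector e_j of ℝ^d (the vertices lying on F), and F_{k,d}(0,…,0) = (1−d)·(1+(−1)^{k+1} ρ_k)/d (the vertex opposite F). -/

import Mathlib

open PowerSeries Finset

lemma coeff_one_sub_X_pow (a j : ℕ) :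
    (PowerSeries.coeff (R := ℝ) j) ((1 - PowerSeries.X) ^ a) = (-1) ^ j * (a.choose j) := by
  have h : ((1 : ℝ⟦X⟧) - X) ^ a
      = ∑ i ∈ range (a + 1), PowerSeries.C (R := ℝ) ((-1) ^ i * (a.choose i)) * X ^ i := by
    rw [sub_eq_add_neg, add_comm, add_pow]
    refine Finset.sum_congr rfl fun i hi => ?_
    rw [neg_pow]
    simp only [map_mul, map_pow, map_neg, map_one, map_natCast]
    ring
  rw [h, map_sum]
  simp only [coeff_C_mul, coeff_X_pow, mul_ite, mul_one, mul_zero]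
  rw [Finset.sum_ite_eq (range (a+1)) j]
  split_ifs with hj
  · rfl
  · rw [Nat.choose_eq_zero_of_lt (by simpa using hj)]
    simp

lemma conv_lemma (n a k : ℕ) (ha : a ≤ n) :
    ∑ ℓ ∈ range (k + 1),
      ((n + ℓ).choose ℓ : ℝ) * ((-1) ^ (k - ℓ) * (a.choose (k - ℓ)))
      = ((n - a + k).choose k : ℝ) := by
  set b := n - a with hb
  have hn : n + 1 = b + 1 + a := by omega
  have hu : invOneSubPow ℝ (b + 1) * invOneSubPow ℝ a = invOneSubPow ℝ (n + 1) := by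
    rw [invOneSubPow_eq_inv_one_sub_pow, invOneSubPow_eq_inv_one_sub_pow,
      invOneSubPow_eq_inv_one_sub_pow, ← pow_add, hn]
  have hmul : (invOneSubPow ℝ (n + 1)).val * ((1 : ℝ⟦X⟧) - X) ^ a
      = (invOneSubPow ℝ (b + 1)).val := by
    have h2 : ((1 : ℝ⟦X⟧) - X) ^ a = ((invOneSubPow ℝ a)⁻¹ : (ℝ⟦X⟧)ˣ).val := by
      rw [← invOneSubPow_inv_eq_one_sub_pow]; rfl
    rw [h2, ← Units.val_mul, ← hu]
    congr 1
    group
  have := congrArg (PowerSeries.coeff (R := ℝ) k) hmul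
  rw [PowerSeries.coeff_mul, invOneSubPow_val_succ_eq_mk_add_choose,
    invOneSubPow_val_succ_eq_mk_add_choose, coeff_mk] at this
  simp only [coeff_mk, coeff_one_sub_X_pow] at this
  rw [Finset.Nat.sum_antidiagonal_eq_sum_range_succ
    (fun i j => ((n + i).choose n : ℝ) * ((-1) ^ j * (a.choose j))) k,
    Nat.choose_symm_add] at this
  rw [← this]
  refine Finset.sum_congr rfl fun ℓ hℓ => ?_
  rw [Nat.choose_symm_add]

lemma neg_one_pow_sub {k ℓ : ℕ} (h : ℓ ≤ k) : (-1 : ℝ) ^ (k - ℓ) = (-1) ^ k * (-1) ^ ℓ := by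
  have h1 : (-1 : ℝ) ^ (k - ℓ) * (-1) ^ ℓ = (-1) ^ k := by
    rw [← pow_add]; congr 1; omega
  have hsq : ((-1 : ℝ) ^ ℓ) * ((-1) ^ ℓ) = 1 := by
    rw [← pow_add, ← two_mul, pow_mul]; norm_num
  calc (-1 : ℝ) ^ (k - ℓ) = (-1) ^ (k - ℓ) * (((-1) ^ ℓ) * ((-1) ^ ℓ)) := by
        rw [hsq, mul_one]
    _ = ((-1) ^ (k - ℓ) * (-1) ^ ℓ) * (-1) ^ ℓ := by ring
    _ = (-1) ^ k * (-1) ^ ℓ := by rw [h1]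

lemma neg_one_pow_mul_eq {k : ℕ} {x y : ℝ} (h : (-1) ^ k * x = y) :
    x = (-1) ^ k * y := by
  have hsq : ((-1 : ℝ) ^ k) * ((-1) ^ k) = 1 := by
    rw [← pow_add, ← two_mul, pow_mul]; norm_num
  calc x = ((-1 : ℝ) ^ k * (-1) ^ k) * x := by rw [hsq, one_mul]
    _ = (-1) ^ k * ((-1) ^ k * x) := by ring
    _ = (-1) ^ k * y := by rw [h]
/-- `Q_{k,d}(x)`: the explicit representation of the Jacobi polynomial
`P_k^{(0,d-2)}(1-2x)`. -/
noncomputable def Qpoly (d k : ℕ) (x : ℝ) : ℝ :=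
  ∑ ℓ ∈ Finset.range (k + 1),
    (-1 : ℝ) ^ ℓ * ((k + ℓ + d - 2).choose ℓ) * (k.choose ℓ) * x ^ ℓ

/-- `R_{k,d}(x)`: the explicit representation of `P_k^{(0,d-2)}(2x-1)`. -/
noncomputable def Rpoly (d k : ℕ) (x : ℝ) : ℝ :=
  (-1 : ℝ) ^ k * ∑ ℓ ∈ Finset.range (k + 1),
    (-1 : ℝ) ^ ℓ * ((k + ℓ + d - 2).choose ℓ) * ((k + d - 2).choose (ℓ + d - 2))
      * x ^ ℓ

lemma Qpoly_zero (d k : ℕ) : Qpoly d k 0 = 1 := by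
  rw [Qpoly, Finset.sum_eq_single 0]
  · simp
  · intro ℓ _ hℓ
    rw [zero_pow hℓ, mul_zero]
  · simp

lemma Rpoly_zero (d k : ℕ) (hd : 2 ≤ d) :
    Rpoly d k 0 = (-1) ^ k * ((k + d - 2).choose k) := by
  rw [Rpoly, Finset.sum_eq_single 0]
  · have h : (k + d - 2).choose (d - 2) = (k + d - 2).choose k := by
      have h1 : k + d - 2 = k + (d - 2) := by omega
      rw [h1, Nat.choose_symm_add]
    simp [h]
  · intro ℓ _ hℓ
    rw [zero_pow hℓ, mul_zero]
  · simp

lemma Qpoly_one (d k : ℕ) (hd : 2 ≤ d) :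
    Qpoly d k 1 = (-1) ^ k * ((k + d - 2).choose k) := by
  have key := conv_lemma (k + (d - 2)) k k (by omega)
  have hrw : ∀ ℓ ∈ range (k + 1),
      ((k + (d - 2) + ℓ).choose ℓ : ℝ) * ((-1) ^ (k - ℓ) * (k.choose (k - ℓ)))
        = (-1) ^ k * ((-1 : ℝ) ^ ℓ * ((k + ℓ + d - 2).choose ℓ) * (k.choose ℓ) * 1 ^ ℓ) := by
    intro ℓ hℓ
    have hℓk : ℓ ≤ k := by simpa [Nat.lt_succ_iff] using hℓ
    have h1 : k + (d - 2) + ℓ = k + ℓ + d - 2 := by omega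
    have h2 : k.choose (k - ℓ) = k.choose ℓ := Nat.choose_symm hℓk
    rw [h1, h2, neg_one_pow_sub hℓk]
    ring
  rw [Finset.sum_congr rfl hrw, ← Finset.mul_sum] at key
  have hsymm : ((k + (d - 2) - k + k).choose k : ℝ) = ((k + d - 2).choose k : ℝ) := by
    congr 2
    omega
  rw [hsymm] at key
  rw [Qpoly]
  have := neg_one_pow_mul_eq key
  simpa using this

lemma Rpoly_one (d k : ℕ) (hd : 2 ≤ d) : Rpoly d k 1 = 1 := by
  have key := conv_lemma (k + (d - 2)) (k + (d - 2)) k le_rfl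
  have hrw : ∀ ℓ ∈ range (k + 1),
      ((k + (d - 2) + ℓ).choose ℓ : ℝ) * ((-1) ^ (k - ℓ) * ((k + (d - 2)).choose (k - ℓ)))
        = (-1) ^ k * ((-1 : ℝ) ^ ℓ * ((k + ℓ + d - 2).choose ℓ)
            * ((k + d - 2).choose (ℓ + d - 2)) * 1 ^ ℓ) := by
    intro ℓ hℓ
    have hℓk : ℓ ≤ k := by simpa [Nat.lt_succ_iff] using hℓ
    have h1 : k + (d - 2) + ℓ = k + ℓ + d - 2 := by omega
    have h2 : (k + (d - 2)).choose (k - ℓ) = (k + d - 2).choose (ℓ + d - 2) := by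
      have := Nat.choose_symm (n := k + (d - 2)) (k := k - ℓ) (by omega)
      rw [show k + (d - 2) - (k - ℓ) = ℓ + (d - 2) by omega] at this
      rw [← this]
      congr 1 <;> omega
    rw [h1, h2, neg_one_pow_sub hℓk]
    ring
  rw [Finset.sum_congr rfl hrw, ← Finset.mul_sum] at key
  rw [show k + (d - 2) - (k + (d - 2)) + k = k by omega, Nat.choose_self] at key
  rw [Rpoly]
  simpa using key

/-- The `d`-variate polynomial `N_{k,d}`; on the reference simplex it equals
`d` times the non-conforming Crouzeix–Raviart simplex function `B_k^{CR,K̂}`. -/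
noncomputable def Npoly (d k : ℕ) (x : Fin d → ℝ) : ℝ :=
  -1 + ∑ j, Qpoly d k (x j) + Rpoly d k (∑ j, x j)


/-- For `d ≥ 2`, `k ≥ 1` and `ρ_k := C(k+d-2, k)`, the facet function
`F_{k,d}(x) := R_{k,d}(∑ x_j) - (1/d) N_{k,d}(x)` (the Crouzeix–Raviart facet
function `B_k^{CR,F}` for the facet `F` opposite the origin) satisfies
`F_{k,d}(e_j) = (1 + (-1)^{k+1} ρ_k)/d` for each standard basis vector `e_j`,
and `F_{k,d}(0) = (1-d)(1 + (-1)^{k+1} ρ_k)/d`. -/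
theorem facet_function_vertex_values (d k : ℕ) (hd : 2 ≤ d) (hk : 1 ≤ k) :
    (∀ j : Fin d,
        Rpoly d k (∑ i, (if i = j then (1 : ℝ) else 0))
            - (1 / d) * Npoly d k (fun i => if i = j then 1 else 0)
          = (1 + (-1) ^ (k + 1) * ((k + d - 2).choose k)) / d) ∧
      Rpoly d k (∑ _i : Fin d, (0 : ℝ)) - (1 / d) * Npoly d k (fun _ => 0)
        = ((1 : ℝ) - d) * (1 + (-1) ^ (k + 1) * ((k + d - 2).choose k)) / d := by
  have hd0 : (d : ℝ) ≠ 0 := by positivity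
  set ρ : ℝ := ((k + d - 2).choose k : ℝ) with hρ
  have hodd : ((-1 : ℝ) ^ (k + 1)) = -(-1) ^ k := by rw [pow_succ]; ring
  constructor
  · intro j
    have hsum : (∑ i, (if i = j then (1 : ℝ) else 0)) = 1 := by
      simp [Finset.sum_ite_eq']
    have hQsum : (∑ i, Qpoly d k (if i = j then (1 : ℝ) else 0))
        = (-1) ^ k * ρ + ((d : ℝ) - 1) := by
      have : ∀ i : Fin d, Qpoly d k (if i = j then (1 : ℝ) else 0)
          = (if i = j then (-1) ^ k * ρ - 1 else 0) + 1 := by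
        intro i
        split_ifs with h
        · rw [Qpoly_one d k hd]; ring
        · rw [Qpoly_zero]; ring
      rw [Finset.sum_congr rfl fun i _ => this i, Finset.sum_add_distrib,
        Finset.sum_ite_eq' Finset.univ j (fun _ => (-1 : ℝ) ^ k * ρ - 1)]
      simp [Finset.card_univ]
      ring
    rw [hsum, Npoly, hsum, hQsum, Rpoly_one d k hd, hodd]
    field_simp
    ring
  · have hzero : (∑ _i : Fin d, (0 : ℝ)) = 0 := by simp
    have hQsum : (∑ _i : Fin d, Qpoly d k 0) = (d : ℝ) := by
      simp [Qpoly_zero, Finset.card_univ]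
    rw [hzero, Npoly]
    simp only [hzero]
    rw [hQsum, Rpoly_zero d k hd, hodd]
    field_simp
    ring
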